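/- Let k be a field and let G be a group containing a subgroup isomorphic to the free group F₂ on two generators. Then the group ring kG does not satisfy the right Ore condition with respect to its set of non-zerodivisors; that is, there exist a non-zerodivisor s and an element r of kG such that rs₁ ≠ sr₁ for all r₁ ∈ kG and all non-zerodivisors s₁. -/

import Mathlib

open MonoidAlgebra

namespace OreFreeAux

variable (k : Type*) [Field k] (G : Type*) [Group G] (f : FreeGroup Bool →* G)

/-- Shorthand for basis elements of the group algebra. -/
noncomputable def ι (g : G) : MonoidAlgebra k G := MonoidAlgebra.single g 1

lemma ι_mul (g h : G) : ι k G g * ι k G h = ι k G (g * h) := by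
  simp [ι, MonoidAlgebra.single_mul_single]

lemma ι_one : ι k G 1 = 1 := by simp [ι, MonoidAlgebra.one_def]

variable {G}

/-- The unit matrices used to build the right Fox cocycle `d`. -/
noncomputable def Ud (x : Bool) : (Matrix (Fin 2) (Fin 2) (MonoidAlgebra k G))ˣ where
  val := !![ι k G (f (FreeGroup.of x)), 0; (if x then 1 else 0), 1]
  inv := !![ι k G (f (FreeGroup.of x))⁻¹, 0;
            -((if x then 1 else 0) * ι k G (f (FreeGroup.of x))⁻¹), 1]
  val_inv := by
    rw [Matrix.mul_fin_two, Matrix.one_fin_two]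
    congr 1 <;> simp [ι_mul, ι_one]
  inv_val := by
    rw [Matrix.mul_fin_two, Matrix.one_fin_two]
    congr 1 <;> simp [ι_mul, ι_one]

/-- The group homomorphism from the free group given by the matrices `Ud`. -/
noncomputable def φd : FreeGroup Bool →* (Matrix (Fin 2) (Fin 2) (MonoidAlgebra k G))ˣ :=
  FreeGroup.lift (Ud k f)

/-- The right Fox derivative (w.r.t. the first generator), with values in `k[G]`. -/
noncomputable def d (u : FreeGroup Bool) : MonoidAlgebra k G := (φd k f u).val 1 0

lemma φd_struct (u : FreeGroup Bool) :
    (φd k f u).val 0 0 = ι k G (f u) ∧ (φd k f u).val 0 1 = 0 ∧ (φd k f u).val 1 1 = 1 := by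
  induction u using FreeGroup.induction_on with
  | C1 => simp [φd, ι_one]
  | of x =>
      simp [φd, FreeGroup.lift_apply_of, Ud]
  | inv_of x _ =>
      have h : φd k f (FreeGroup.of x)⁻¹ = (Ud k f x)⁻¹ := by
        rw [map_inv, φd, FreeGroup.lift_apply_of]
      rw [h]
      show (Ud k f x).inv 0 0 = _ ∧ (Ud k f x).inv 0 1 = 0 ∧ (Ud k f x).inv 1 1 = 1
      simp [Ud]
  | mul u v hu hv =>
      have hm : (φd k f (u * v)).val = (φd k f u).val * (φd k f v).val := by
        rw [map_mul]; rfl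
      obtain ⟨hu1, hu2, hu3⟩ := hu
      obtain ⟨hv1, hv2, hv3⟩ := hv
      refine ⟨?_, ?_, ?_⟩ <;>
        simp [hm, Matrix.mul_apply, Fin.sum_univ_two, hu1, hu2, hu3, hv1, hv2, hv3,
          map_mul, ι_mul]

lemma d_cocycle (u v : FreeGroup Bool) :
    d k f (u * v) = d k f u * ι k G (f v) + d k f v := by
  have hm : (φd k f (u * v)).val = (φd k f u).val * (φd k f v).val := by
    rw [map_mul]; rfl
  have hv1 := (φd_struct k f v).1
  have hu3 := (φd_struct k f u).2.2
  simp [d, hm, Matrix.mul_apply, Fin.sum_univ_two, hv1, hu3]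

lemma d_of (x : Bool) : d k f (FreeGroup.of x) = if x then 1 else 0 := by
  simp [d, φd, FreeGroup.lift_apply_of, Ud]

/-- The unit matrices used to build the left Fox cocycle `e`. -/
noncomputable def Ue (x : Bool) : (Matrix (Fin 2) (Fin 2) (MonoidAlgebra k G))ˣ where
  val := !![ι k G (f (FreeGroup.of x)), (if x then 1 else 0); 0, 1]
  inv := !![ι k G (f (FreeGroup.of x))⁻¹,
            -(ι k G (f (FreeGroup.of x))⁻¹ * (if x then 1 else 0)); 0, 1]
  val_inv := by
    rw [Matrix.mul_fin_two, Matrix.one_fin_two]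
    congr 1 <;> simp [ι_mul, ι_one, mul_assoc]
  inv_val := by
    rw [Matrix.mul_fin_two, Matrix.one_fin_two]
    congr 1 <;> simp [ι_mul, ι_one, mul_assoc]

noncomputable def φe : FreeGroup Bool →* (Matrix (Fin 2) (Fin 2) (MonoidAlgebra k G))ˣ :=
  FreeGroup.lift (Ue k f)

/-- The left Fox derivative (w.r.t. the first generator), with values in `k[G]`. -/
noncomputable def e (u : FreeGroup Bool) : MonoidAlgebra k G := (φe k f u).val 0 1

lemma φe_struct (u : FreeGroup Bool) :
    (φe k f u).val 0 0 = ι k G (f u) ∧ (φe k f u).val 1 0 = 0 ∧ (φe k f u).val 1 1 = 1 := by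
  induction u using FreeGroup.induction_on with
  | C1 => simp [φe, ι_one]
  | of x =>
      simp [φe, FreeGroup.lift_apply_of, Ue]
  | inv_of x _ =>
      have h : φe k f (FreeGroup.of x)⁻¹ = (Ue k f x)⁻¹ := by
        rw [map_inv, φe, FreeGroup.lift_apply_of]
      rw [h]
      show (Ue k f x).inv 0 0 = _ ∧ (Ue k f x).inv 1 0 = 0 ∧ (Ue k f x).inv 1 1 = 1
      simp [Ue]
  | mul u v hu hv =>
      have hm : (φe k f (u * v)).val = (φe k f u).val * (φe k f v).val := by
        rw [map_mul]; rfl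
      obtain ⟨hu1, hu2, hu3⟩ := hu
      obtain ⟨hv1, hv2, hv3⟩ := hv
      refine ⟨?_, ?_, ?_⟩ <;>
        simp [hm, Matrix.mul_apply, Fin.sum_univ_two, hu1, hu2, hu3, hv1, hv2, hv3,
          map_mul, ι_mul]

lemma e_cocycle (u v : FreeGroup Bool) :
    e k f (u * v) = ι k G (f u) * e k f v + e k f u := by
  have hm : (φe k f (u * v)).val = (φe k f u).val * (φe k f v).val := by
    rw [map_mul]; rfl
  have hu1 := (φe_struct k f u).1
  have hv3 := (φe_struct k f v).2.2
  simp [e, hm, Matrix.mul_apply, Fin.sum_univ_two, hu1, hv3]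

lemma e_of (x : Bool) : e k f (FreeGroup.of x) = if x then 1 else 0 := by
  simp [e, φe, FreeGroup.lift_apply_of, Ue]

/-! ### Right coset machinery -/

variable (G) in
noncomputable def tR (g : G) : G := (Quotient.mk (QuotientGroup.rightRel f.range) g).out

lemma tR_mem (g : G) : g * (tR G f g)⁻¹ ∈ f.range := by
  have h := Quotient.mk_out (s := QuotientGroup.rightRel f.range) g
  exact (QuotientGroup.rightRel_apply).mp h

lemma tR_mul (h g : G) (hh : h ∈ f.range) : tR G f (h * g) = tR G f g := by
  unfold tR
  congr 1
  exact Quotient.sound ((QuotientGroup.rightRel_apply).mpr (by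
    simpa [mul_assoc] using inv_mem hh))

noncomputable def uR (g : G) : FreeGroup Bool :=
  (MonoidHom.mem_range.mp (tR_mem f g)).choose

lemma uR_spec (g : G) : f (uR f g) = g * (tR G f g)⁻¹ :=
  (MonoidHom.mem_range.mp (tR_mem f g)).choose_spec

lemma uR_mul (hf : Function.Injective f) (u : FreeGroup Bool) (g : G) : uR f (f u * g) = u * uR f g := by
  apply hf
  rw [uR_spec, map_mul, uR_spec, tR_mul _ _ _ ⟨u, rfl⟩, mul_assoc]

/-- The coset-wise extension of `d` to a basis function on `G`. -/
noncomputable def δ (g : G) : MonoidAlgebra k G := d k f (uR f g) * ι k G (tR G f g)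

lemma δ_mul_gen (hf : Function.Injective f) (x : Bool) (g : G) :
    δ k f (f (FreeGroup.of x) * g) = (if x then ι k G g else 0) + δ k f g := by
  unfold δ
  rw [tR_mul _ _ _ ⟨FreeGroup.of x, rfl⟩, uR_mul f hf, d_cocycle, d_of, add_mul]
  congr 1
  cases x
  · simp
  · simp only [if_true, one_mul, ι_mul]
    rw [uR_spec, inv_mul_cancel_right]

/-- The linear extension of `δ` to the group algebra. -/
noncomputable def D : MonoidAlgebra k G →ₗ[k] MonoidAlgebra k G :=
  Finsupp.lift (MonoidAlgebra k G) k G (δ k f) ∘ₗ (MonoidAlgebra.coeffLinearEquiv k).toLinearMap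

lemma D_single (g : G) (c : k) :
    D k f (MonoidAlgebra.single g c) = c • δ k f g := by
  unfold D
  rw [LinearMap.comp_apply]
  erw [Finsupp.lift_apply]
  exact Finsupp.sum_single_index (by simp)

lemma D_gen_mul (hf : Function.Injective f) (x : Bool) (z : MonoidAlgebra k G) :
    D k f (ι k G (f (FreeGroup.of x)) * z) = (if x then z else 0) + D k f z := by
  induction z using MonoidAlgebra.induction_linear with
  | zero => simp
  | add p q hp hq =>
      rw [mul_add, map_add, hp, hq, map_add]
      cases x <;> simp <;> abel
  | single g c =>
      have : ι k G (f (FreeGroup.of x)) * MonoidAlgebra.single g c =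
          MonoidAlgebra.single (f (FreeGroup.of x) * g) c := by
        simp [ι, MonoidAlgebra.single_mul_single]
      rw [this, D_single, δ_mul_gen k f hf, smul_add, D_single]
      cases x
      · simp
      · simp only [if_true]
        congr 1
        simp [ι, Finsupp.smul_single]

lemma D_keyA (hf : Function.Injective f) (z : MonoidAlgebra k G) :
    D k f ((ι k G (f (FreeGroup.of true)) - 1) * z) = z := by
  rw [sub_mul, one_mul, map_sub, D_gen_mul k f hf]
  simp

lemma D_keyB (hf : Function.Injective f) (z : MonoidAlgebra k G) :
    D k f ((ι k G (f (FreeGroup.of false)) - 1) * z) = 0 := by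
  rw [sub_mul, one_mul, map_sub, D_gen_mul k f hf]
  simp

/-! ### Left coset machinery -/

variable (G) in
noncomputable def tL (g : G) : G := (Quotient.mk (QuotientGroup.leftRel f.range) g).out

lemma tL_mem (g : G) : (tL G f g)⁻¹ * g ∈ f.range := by
  have h := Quotient.mk_out (s := QuotientGroup.leftRel f.range) g
  exact (QuotientGroup.leftRel_apply).mp h

lemma tL_mul (g h : G) (hh : h ∈ f.range) : tL G f (g * h) = tL G f g := by
  unfold tL
  congr 1
  exact Quotient.sound ((QuotientGroup.leftRel_apply).mpr (by
    simpa [mul_assoc] using inv_mem hh))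

noncomputable def uL (g : G) : FreeGroup Bool :=
  (MonoidHom.mem_range.mp (tL_mem f g)).choose

lemma uL_spec (g : G) : f (uL f g) = (tL G f g)⁻¹ * g :=
  (MonoidHom.mem_range.mp (tL_mem f g)).choose_spec

lemma uL_mul (hf : Function.Injective f) (u : FreeGroup Bool) (g : G) : uL f (g * f u) = uL f g * u := by
  apply hf
  rw [uL_spec, map_mul, uL_spec, tL_mul _ _ _ ⟨u, rfl⟩, mul_assoc]

noncomputable def ε (g : G) : MonoidAlgebra k G := ι k G (tL G f g) * e k f (uL f g)

lemma ε_mul_gen (hf : Function.Injective f) (x : Bool) (g : G) :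
    ε k f (g * f (FreeGroup.of x)) = (if x then ι k G g else 0) + ε k f g := by
  unfold ε
  rw [tL_mul _ _ _ ⟨FreeGroup.of x, rfl⟩, uL_mul f hf, e_cocycle, e_of, mul_add]
  cases x
  · simp
  · simp only [if_true, mul_one]
    congr 1
    rw [ι_mul, uL_spec, mul_inv_cancel_left]

noncomputable def E : MonoidAlgebra k G →ₗ[k] MonoidAlgebra k G :=
  Finsupp.lift (MonoidAlgebra k G) k G (ε k f) ∘ₗ (MonoidAlgebra.coeffLinearEquiv k).toLinearMap

lemma E_single (g : G) (c : k) :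
    E k f (MonoidAlgebra.single g c) = c • ε k f g := by
  unfold E
  rw [LinearMap.comp_apply]
  erw [Finsupp.lift_apply]
  exact Finsupp.sum_single_index (by simp)

lemma E_mul_gen (hf : Function.Injective f) (x : Bool) (z : MonoidAlgebra k G) :
    E k f (z * ι k G (f (FreeGroup.of x))) = (if x then z else 0) + E k f z := by
  induction z using MonoidAlgebra.induction_linear with
  | zero => simp
  | add p q hp hq =>
      rw [add_mul, map_add, hp, hq, map_add]
      cases x <;> simp <;> abel
  | single g c =>
      have : MonoidAlgebra.single g c * ι k G (f (FreeGroup.of x)) =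
          MonoidAlgebra.single (g * f (FreeGroup.of x)) c := by
        simp [ι, MonoidAlgebra.single_mul_single]
      rw [this, E_single, ε_mul_gen k f hf, smul_add, E_single]
      cases x
      · simp
      · simp only [if_true]
        congr 1
        simp [ι, Finsupp.smul_single]

lemma E_keyA (hf : Function.Injective f) (z : MonoidAlgebra k G) :
    E k f (z * (ι k G (f (FreeGroup.of true)) - 1)) = z := by
  rw [mul_sub, mul_one, map_sub, E_mul_gen k f hf]
  simp

end OreFreeAux

open OreFreeAux in
/-- If a group `G` contains a subgroup isomorphic to the free group on two
generators, then for any field `k` the group ring `kG` fails the right Ore condition with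
respect to its set of (two-sided) non-zerodivisors. -/
theorem stmt_1 (k : Type*) [Field k] (G : Type*) [Group G]
    (f : FreeGroup Bool →* G) (hf : Function.Injective f) :
    ∃ s r : MonoidAlgebra k G,
      (∀ z : MonoidAlgebra k G, z ≠ 0 → s * z ≠ 0 ∧ z * s ≠ 0) ∧
      ∀ r₁ s₁ : MonoidAlgebra k G,
        (∀ z : MonoidAlgebra k G, z ≠ 0 → s₁ * z ≠ 0 ∧ z * s₁ ≠ 0) →
        r * s₁ ≠ s * r₁ := by
  refine ⟨ι k G (f (FreeGroup.of true)) - 1, ι k G (f (FreeGroup.of false)) - 1, ?_, ?_⟩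
  · intro z hz
    constructor
    · intro h
      apply hz
      have := D_keyA k f hf z
      rw [h, map_zero] at this
      exact this.symm
    · intro h
      apply hz
      have := E_keyA k f hf z
      rw [h, map_zero] at this
      exact this.symm
  · intro r₁ s₁ hs₁ heq
    -- r ≠ 0
    have hB : f (FreeGroup.of false) ≠ 1 := by
      intro h
      exact FreeGroup.of_ne_one false (hf (by rw [h, map_one]))
    have hr : (ι k G (f (FreeGroup.of false)) - 1 : MonoidAlgebra k G) ≠ 0 := by
      intro h
      have h' : (ι k G (f (FreeGroup.of false)) : MonoidAlgebra k G) = 1 := by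
        linear_combination (norm := abel) h
      rw [ι, MonoidAlgebra.one_def] at h'
      have := (MonoidAlgebra.single_inj).mp h'
      rcases this with ⟨h1, _⟩ | ⟨h1, _⟩
      · exact hB h1
      · exact one_ne_zero h1
    have hne : (ι k G (f (FreeGroup.of false)) - 1) * s₁ ≠ 0 := (hs₁ _ hr).2
    have h0 : D k f ((ι k G (f (FreeGroup.of false)) - 1) * s₁) = 0 := D_keyB k f hf s₁
    have h1 : D k f ((ι k G (f (FreeGroup.of true)) - 1) * r₁) = r₁ := D_keyA k f hf r₁
    rw [heq, h1] at h0
    rw [heq, h0, mul_zero] at hne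
    exact hne rfl
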